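/- There exists a sequence (e_α : α < ω₁) such that each e_α : α → ℕ is injective, and for all α₁, α₂ < ω₁ the set {β < min(α₁,α₂) : e_{α₁}(β) ≠ e_{α₂}(β)} is finite. -/

import Mathlib

open Cardinal Set

noncomputable section Stmt4Aux

/-- The coherent sequence, built by (choice-based) transfinite recursion. -/
noncomputable def EC : Ordinal.{0} → Ordinal.{0} → ℕ :=
  Ordinal.lt_wf.fix fun α IH =>
    Classical.epsilon fun f : Ordinal.{0} → ℕ =>
      Set.InjOn f (Set.Iio α) ∧ (f '' Set.Iio α)ᶜ.Infinite ∧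
        ∀ β (h : β < α), {γ | γ < β ∧ f γ ≠ IH β h γ}.Finite

/-- The invariant. -/
def GoodAt (α : Ordinal.{0}) (f : Ordinal.{0} → ℕ) : Prop :=
  Set.InjOn f (Set.Iio α) ∧ (f '' Set.Iio α)ᶜ.Infinite ∧
    ∀ β (_ : β < α), {γ | γ < β ∧ f γ ≠ EC β γ}.Finite

lemma EC_def (α : Ordinal.{0}) : EC α = Classical.epsilon (GoodAt α) :=
  Ordinal.lt_wf.fix_eq _ α

lemma goodAt_EC {α : Ordinal.{0}} (h : ∃ f, GoodAt α f) : GoodAt α (EC α) := by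
  rw [EC_def]; exact Classical.epsilon_spec h

lemma ext_step (A B : Ordinal.{0}) (hAB : A < B) (hB : GoodAt B (EC B))
    (g : Ordinal.{0} → ℕ) (hg1 : Set.InjOn g (Set.Iio A))
    (hg3 : {γ | γ < A ∧ g γ ≠ EC A γ}.Finite) :
    ∃ g' : Ordinal.{0} → ℕ, (∀ γ < A, g' γ = g γ) ∧ Set.InjOn g' (Set.Iio B) ∧
      (g' '' Set.Iio B)ᶜ.Infinite ∧ {γ | γ < B ∧ g' γ ≠ EC B γ}.Finite := by
  classical
  set e := EC B with he
  have hD : {γ | γ < A ∧ g γ ≠ e γ}.Finite := by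
    apply (hg3.union (hB.2.2 A hAB)).subset
    rintro γ ⟨h1, h2⟩
    by_cases hc : g γ = EC A γ
    · exact Or.inr ⟨h1, fun hh => h2 (by rw [hc, ← hh])⟩
    · exact Or.inl ⟨h1, hc⟩
  set D := {γ | γ < A ∧ g γ ≠ e γ} with hDdef
  set GD := g '' D with hGDdef
  have hGD : GD.Finite := hD.image g
  have hN : ((e '' Set.Iio B)ᶜ \ GD).Infinite := hB.2.1.diff hGD
  set N := (e '' Set.Iio B)ᶜ \ GD with hNdef
  let emb : ℕ ↪ N := Set.Infinite.natEmbedding N hN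
  have hembN : ∀ k : ℕ, ((emb k : N) : ℕ) ∈ N := fun k => (emb k).2
  have hembinj : Function.Injective fun k => ((emb k : N) : ℕ) :=
    fun a b hab => emb.injective (Subtype.coe_injective hab)
  set g' : Ordinal.{0} → ℕ := fun γ =>
    if γ < A then g γ else if γ < B ∧ e γ ∈ GD then ((emb (2 * e γ) : N) : ℕ) else e γ
    with hg'def
  -- basic value lemmas
  have hvlow : ∀ γ, γ < A → g' γ = g γ := fun γ h => by simp only [hg'def, if_pos h]
  have hvconf : ∀ γ, ¬ γ < A → γ < B → e γ ∈ GD → g' γ = ((emb (2 * e γ) : N) : ℕ) := by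
    intro γ h1 h2 h3; simp only [hg'def, if_neg h1, if_pos (⟨h2, h3⟩ : γ < B ∧ e γ ∈ GD)]
  have hvtail : ∀ γ, ¬ γ < A → γ < B → e γ ∉ GD → g' γ = e γ := by
    intro γ h1 h2 h3
    have : ¬ (γ < B ∧ e γ ∈ GD) := fun hc => h3 hc.2
    simp only [hg'def, if_neg h1, if_neg this]
  -- the value of g' at a point below A is never an e-image-free fresh value etc.
  have hlow_mem : ∀ γ, γ < A → g' γ ∈ GD ∨ g' γ ∈ e '' Set.Iio B := by
    intro γ hγ
    rw [hvlow γ hγ]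
    by_cases hγD : γ ∈ D
    · exact Or.inl ⟨γ, hγD, rfl⟩
    · have : g γ = e γ := by_contra fun hne => hγD ⟨hγ, hne⟩
      exact Or.inr ⟨γ, hγ.trans hAB, this.symm⟩
  refine ⟨g', hvlow, ?_, ?_, ?_⟩
  · -- injectivity on Iio B
    intro x hx y hy hxy
    simp only [mem_Iio] at hx hy
    by_cases hxA : x < A <;> by_cases hyA : y < A
    · exact hg1 hxA hyA (by rwa [hvlow x hxA, hvlow y hyA] at hxy)
    · -- x < A, y ≥ A
      exfalso
      by_cases hyc : e y ∈ GD
      · -- fresh value: not in GD nor e-image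
        rw [hvconf y hyA hy hyc] at hxy
        rcases hlow_mem x hxA with h | h
        · exact (hembN _).2 (hxy ▸ h)
        · exact (hembN _).1 (hxy ▸ h)
      · rw [hvtail y hyA hy hyc, hvlow x hxA] at hxy
        by_cases hxD : x ∈ D
        · exact hyc ⟨x, hxD, hxy⟩
        · have hgx : g x = e x := by_contra fun hne => hxD ⟨hxA, hne⟩
          have : x = y := hB.1 (mem_Iio.2 (hxA.trans hAB)) (mem_Iio.2 hy) (by rw [← hgx, hxy])
          exact hyA (this ▸ hxA)
    · -- y < A, x ≥ A : symmetric
      exfalso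
      by_cases hxc : e x ∈ GD
      · rw [hvconf x hxA hx hxc] at hxy
        rcases hlow_mem y hyA with h | h
        · exact (hembN _).2 (hxy ▸ h)
        · exact (hembN _).1 (hxy ▸ h)
      · rw [hvtail x hxA hx hxc, hvlow y hyA] at hxy
        by_cases hyD : y ∈ D
        · exact hxc ⟨y, hyD, hxy.symm⟩
        · have hgy : g y = e y := by_contra fun hne => hyD ⟨hyA, hne⟩
          have : x = y := hB.1 (mem_Iio.2 hx) (mem_Iio.2 (hyA.trans hAB)) (by rw [← hgy, hxy, hgy])
          exact hxA (this ▸ hyA)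
    · -- both ≥ A
      by_cases hxc : e x ∈ GD <;> by_cases hyc : e y ∈ GD
      · rw [hvconf x hxA hx hxc, hvconf y hyA hy hyc] at hxy
        have : 2 * e x = 2 * e y := hembinj hxy
        have : e x = e y := by omega
        exact hB.1 (mem_Iio.2 hx) (mem_Iio.2 hy) this
      · exfalso
        rw [hvconf x hxA hx hxc, hvtail y hyA hy hyc] at hxy
        exact (hembN _).1 (by rw [hxy]; exact ⟨y, mem_Iio.2 hy, rfl⟩)
      · exfalso
        rw [hvtail x hxA hx hxc, hvconf y hyA hy hyc] at hxy
        exact (hembN _).1 (by rw [← hxy]; exact ⟨x, mem_Iio.2 hx, rfl⟩)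
      · rw [hvtail x hxA hx hxc, hvtail y hyA hy hyc] at hxy
        exact hB.1 (mem_Iio.2 hx) (mem_Iio.2 hy) hxy
  · -- coinfinite range
    apply Set.infinite_of_injective_forall_mem
      (f := fun k : ℕ => ((emb (2 * k + 1) : N) : ℕ))
    · intro a b hab
      have := hembinj hab
      omega
    · intro k
      intro hmem
      rw [mem_image] at hmem
      obtain ⟨x, hx, hgx⟩ := hmem
      rw [mem_Iio] at hx
      by_cases hxA : x < A
      · rcases hlow_mem x hxA with h | h
        · exact (hembN _).2 (hgx ▸ h)
        · exact (hembN _).1 (hgx ▸ h)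
      · by_cases hxc : e x ∈ GD
        · rw [hvconf x hxA hx hxc] at hgx
          have := hembinj hgx
          omega
        · rw [hvtail x hxA hx hxc] at hgx
          exact (hembN _).1 (by rw [← hgx]; exact ⟨x, mem_Iio.2 hx, rfl⟩)
  · -- finite difference with e = EC B
    have hC : {γ | γ < B ∧ ¬ γ < A ∧ e γ ∈ GD}.Finite := by
      apply Set.Finite.of_finite_image (f := e)
      · exact hGD.subset (by rintro n ⟨γ, ⟨_, _, hγ⟩, rfl⟩; exact hγ)
      · exact hB.1.mono (fun γ hγ => mem_Iio.2 hγ.1)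
    apply (hD.union hC).subset
    rintro γ ⟨hγB, hne⟩
    by_cases hγA : γ < A
    · left
      refine ⟨hγA, fun hc => hne ?_⟩
      rw [hvlow γ hγA, hc]
    · right
      by_cases hγc : e γ ∈ GD
      · exact ⟨hγB, hγA, hγc⟩
      · exact absurd (hvtail γ hγA hγB hγc) hne

/-- Property of a partial stage in the limit construction. -/
def PStage (a : ℕ → Ordinal.{0}) (n : ℕ) (g : Ordinal.{0} → ℕ) : Prop :=
  Set.InjOn g (Set.Iio (a n)) ∧ {γ | γ < a n ∧ g γ ≠ EC (a n) γ}.Finite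

noncomputable def FSeq (a : ℕ → Ordinal.{0})
    (H : ∀ n (g : Ordinal.{0} → ℕ), PStage a n g →
      ∃ g', (∀ γ < a n, g' γ = g γ) ∧ PStage a (n + 1) g')
    (base : {g // PStage a 0 g}) : (n : ℕ) → {g // PStage a n g}
  | 0 => base
  | n + 1 => ⟨(H n (FSeq a H base n).1 (FSeq a H base n).2).choose,
      (H n (FSeq a H base n).1 (FSeq a H base n).2).choose_spec.2⟩

lemma FSeq_succ (a : ℕ → Ordinal.{0}) (H) (base) (n : ℕ) :
    ∀ γ < a n, (FSeq a H base (n + 1)).1 γ = (FSeq a H base n).1 γ :=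
  (H n (FSeq a H base n).1 (FSeq a H base n).2).choose_spec.1

lemma FSeq_agree (a : ℕ → Ordinal.{0}) (H) (base) (hmono : Monotone a) :
    ∀ n m, n ≤ m → ∀ γ < a n, (FSeq a H base m).1 γ = (FSeq a H base n).1 γ := by
  intro n m hnm
  induction m, hnm using Nat.le_induction with
  | base => intro γ _; rfl
  | succ m hm ihm =>
    intro γ hγ
    rw [FSeq_succ a H base m γ (lt_of_lt_of_le hγ (hmono hm))]
    exact ihm γ hγ

section Glue

variable (α : Ordinal.{0}) (a : ℕ → Ordinal.{0}) (G : ℕ → Ordinal.{0} → ℕ)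
  (cover : ∀ β < α, ∃ n, β < a n)

noncomputable def glue : Ordinal.{0} → ℕ := fun β =>
  if h : β < α then G ((cover β h).choose) β else 0

lemma glue_eq (hagree : ∀ n m, n ≤ m → ∀ γ < a n, G m γ = G n γ)
    (n : ℕ) (β : Ordinal.{0}) (h : β < α) (hn : β < a n) :
    glue α a G cover β = G n β := by
  rw [glue, dif_pos h]
  have hc : β < a ((cover β h).choose) := (cover β h).choose_spec
  rcases le_total ((cover β h).choose) n with hcn | hnc
  · exact (hagree _ n hcn β hc).symm
  · exact hagree n _ hnc β hn

lemma glue_inj (hagree : ∀ n m, n ≤ m → ∀ γ < a n, G m γ = G n γ)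
    (hmono : Monotone a) (hinj : ∀ n, Set.InjOn (G n) (Set.Iio (a n))) :
    Set.InjOn (glue α a G cover) (Set.Iio α) := by
  intro x hx y hy hxy
  rw [Set.mem_Iio] at hx hy
  obtain ⟨n₁, hn₁⟩ := cover x hx
  obtain ⟨n₂, hn₂⟩ := cover y hy
  have hx' : x < a (max n₁ n₂) := lt_of_lt_of_le hn₁ (hmono (le_max_left _ _))
  have hy' : y < a (max n₁ n₂) := lt_of_lt_of_le hn₂ (hmono (le_max_right _ _))
  rw [glue_eq α a G cover hagree _ x hx hx', glue_eq α a G cover hagree _ y hy hy'] at hxy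
  exact hinj _ (Set.mem_Iio.2 hx') (Set.mem_Iio.2 hy') hxy

lemma glue_diff (hagree : ∀ n m, n ≤ m → ∀ γ < a n, G m γ = G n γ)
    (hEC : ∀ n, GoodAt (a n) (EC (a n)))
    (hdiff : ∀ n, {γ | γ < a n ∧ G n γ ≠ EC (a n) γ}.Finite) :
    ∀ β < α, {γ | γ < β ∧ glue α a G cover γ ≠ EC β γ}.Finite := by
  intro β hβ
  obtain ⟨n, hn⟩ := cover β hβ
  apply ((hdiff n).union ((hEC n).2.2 β hn)).subset
  rintro γ ⟨hγβ, hne⟩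
  have hγα : γ < α := hγβ.trans hβ
  have hγa : γ < a n := hγβ.trans hn
  rw [glue_eq α a G cover hagree n γ hγα hγa] at hne
  by_cases hc : G n γ = EC (a n) γ
  · exact Or.inr ⟨hγβ, fun hh => hne (by rw [hc, hh])⟩
  · exact Or.inl ⟨hγa, hc⟩

end Glue

section Repair

variable (α : Ordinal.{0}) (a : ℕ → Ordinal.{0}) (gl : Ordinal.{0} → ℕ)

open Classical in
noncomputable def repair : Ordinal.{0} → ℕ := fun β =>
  if hk : ∃ k, a k = β then gl (a (2 * hk.choose)) else gl β

lemma repair_special (hainj : Function.Injective a) (j : ℕ) :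
    repair a gl (a j) = gl (a (2 * j)) := by
  have hk : ∃ k, a k = a j := ⟨j, rfl⟩
  rw [repair, dif_pos hk, hainj hk.choose_spec]

lemma repair_nonspecial (β : Ordinal.{0}) (h : ¬ ∃ k, a k = β) : repair a gl β = gl β := by
  rw [repair, dif_neg h]

lemma repair_injOn (hainj : Function.Injective a) (haα : ∀ n, a n < α)
    (hglinj : Set.InjOn gl (Set.Iio α)) :
    Set.InjOn (repair a gl) (Set.Iio α) := by
  have key : ∀ β, β < α → ∀ j : ℕ, repair a gl β = gl (a (2 * j)) → ¬ (∃ k, a k = β) → False := by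
    intro β hβ j hval hk
    rw [repair_nonspecial a gl β hk] at hval
    have := hglinj (Set.mem_Iio.2 hβ) (Set.mem_Iio.2 (haα (2 * j))) hval
    exact hk ⟨2 * j, this.symm⟩
  intro x hx y hy hxy
  rw [Set.mem_Iio] at hx hy
  by_cases hkx : ∃ k, a k = x <;> by_cases hky : ∃ k, a k = y
  · obtain ⟨kx, rfl⟩ := hkx
    obtain ⟨ky, rfl⟩ := hky
    rw [repair_special a gl hainj kx, repair_special a gl hainj ky] at hxy
    have h1 := hglinj (Set.mem_Iio.2 (haα _)) (Set.mem_Iio.2 (haα _)) hxy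
    have h2 := hainj h1
    have : kx = ky := by omega
    rw [this]
  · obtain ⟨kx, rfl⟩ := hkx
    rw [repair_special a gl hainj kx] at hxy
    exact (key y hy kx hxy.symm hky).elim
  · obtain ⟨ky, rfl⟩ := hky
    rw [repair_special a gl hainj ky] at hxy
    exact (key x hx ky hxy hkx).elim
  · rw [repair_nonspecial a gl x hkx, repair_nonspecial a gl y hky] at hxy
    exact hglinj (Set.mem_Iio.2 hx) (Set.mem_Iio.2 hy) hxy

lemma repair_compl (hainj : Function.Injective a) (haα : ∀ n, a n < α)
    (hglinj : Set.InjOn gl (Set.Iio α)) :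
    ((repair a gl) '' Set.Iio α)ᶜ.Infinite := by
  apply Set.infinite_of_injective_forall_mem (f := fun k : ℕ => gl (a (2 * k + 1)))
  · intro i j hij
    have h1 := hglinj (Set.mem_Iio.2 (haα _)) (Set.mem_Iio.2 (haα _)) hij
    have h2 := hainj h1
    omega
  · intro k hmem
    rw [Set.mem_image] at hmem
    obtain ⟨x, hx, hgx⟩ := hmem
    rw [Set.mem_Iio] at hx
    by_cases hkx : ∃ j, a j = x
    · obtain ⟨j, rfl⟩ := hkx
      rw [repair_special a gl hainj j] at hgx
      have h1 := hglinj (Set.mem_Iio.2 (haα _)) (Set.mem_Iio.2 (haα _)) hgx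
      have h2 := hainj h1
      omega
    · rw [repair_nonspecial a gl x hkx] at hgx
      have := hglinj (Set.mem_Iio.2 hx) (Set.mem_Iio.2 (haα _)) hgx
      exact hkx ⟨2 * k + 1, this.symm⟩

lemma repair_diff (hstrict : StrictMono a) (cover : ∀ β < α, ∃ n, β < a n)
    (hgldiff : ∀ β < α, {γ | γ < β ∧ gl γ ≠ EC β γ}.Finite) :
    ∀ β < α, {γ | γ < β ∧ repair a gl γ ≠ EC β γ}.Finite := by
  intro β hβ
  obtain ⟨K, hK⟩ := cover β hβ
  have hfin1 : (a '' Set.Iio K).Finite := (Set.finite_Iio K).image a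
  apply ((hfin1.union (hgldiff β hβ)).subset)
  rintro γ ⟨hγβ, hne⟩
  by_cases hkγ : ∃ k, a k = γ
  · obtain ⟨k, rfl⟩ := hkγ
    exact Or.inl ⟨k, Set.mem_Iio.2 (hstrict.lt_iff_lt.1 (hγβ.trans hK)), rfl⟩
  · rw [repair_nonspecial a gl γ hkγ] at hne
    exact Or.inr ⟨hγβ, hne⟩

end Repair

section ASeq

def aSeq (s : ℕ → Ordinal.{0}) : ℕ → Ordinal.{0}
  | 0 => s 0 + 1
  | n + 1 => max (aSeq s n + 1) (s (n + 1) + 1)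

lemma aSeq_lt (s : ℕ → Ordinal.{0}) (α : Ordinal.{0}) (hlim : Order.IsSuccLimit α)
    (hs : ∀ n, s n < α) : ∀ n, aSeq s n < α := by
  intro n
  induction n with
  | zero =>
    show s 0 + 1 < α
    rw [Ordinal.add_one_eq_succ]
    exact hlim.succ_lt (hs 0)
  | succ n ih =>
    show max (aSeq s n + 1) (s (n + 1) + 1) < α
    rw [Ordinal.add_one_eq_succ, Ordinal.add_one_eq_succ]
    exact max_lt (hlim.succ_lt ih) (hlim.succ_lt (hs (n + 1)))

lemma aSeq_strict (s : ℕ → Ordinal.{0}) : StrictMono (aSeq s) := by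
  apply strictMono_nat_of_lt_succ
  intro n
  calc aSeq s n < aSeq s n + 1 := by
        rw [Ordinal.add_one_eq_succ]; exact Order.lt_succ _
  _ ≤ max (aSeq s n + 1) (s (n + 1) + 1) := le_max_left _ _

lemma aSeq_gt (s : ℕ → Ordinal.{0}) : ∀ n, s n < aSeq s n := by
  intro n
  cases n with
  | zero =>
    show s 0 < s 0 + 1
    rw [Ordinal.add_one_eq_succ]; exact Order.lt_succ _
  | succ n =>
    calc s (n + 1) < s (n + 1) + 1 := by
          rw [Ordinal.add_one_eq_succ]; exact Order.lt_succ _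
    _ ≤ max (aSeq s n + 1) (s (n + 1) + 1) := le_max_right _ _

end ASeq

lemma good_all : ∀ α : Ordinal.{0}, α < (Cardinal.aleph 1).ord → GoodAt α (EC α) := by
  intro α
  induction α using Ordinal.induction with
  | h α IH =>
  intro hα
  apply goodAt_EC
  have IH' : ∀ β, β < α → GoodAt β (EC β) := fun β hβ => IH β hβ (hβ.trans hα)
  rcases Ordinal.zero_or_succ_or_isSuccLimit α with rfl | ⟨β, rfl⟩ | hlim
  · -- zero case
    have hIio : Set.Iio (0 : Ordinal.{0}) = ∅ :=
      Set.eq_empty_iff_forall_notMem.2 fun x hx => (zero_le (a := x)).not_gt hx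
    refine ⟨fun _ => 0, ?_, ?_, ?_⟩
    · rw [hIio]; exact Set.injOn_empty _
    · rw [hIio, Set.image_empty, Set.compl_empty]; exact Set.infinite_univ
    · intro β hβ
      exact absurd hβ (zero_le (a := β)).not_gt
  · -- successor case
    have hβα : β < Order.succ β := Order.lt_succ β
    have hG := IH' β hβα
    obtain ⟨m, hm⟩ := hG.2.1.nonempty
    classical
    refine ⟨fun γ => if γ = β then m else EC β γ, ?_, ?_, ?_⟩
    · -- injectivity
      intro x hx y hy hxy
      rw [Set.mem_Iio, Order.lt_succ_iff] at hx hy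
      beta_reduce at hxy
      by_cases hxb : x = β <;> by_cases hyb : y = β
      · rw [hxb, hyb]
      · exfalso
        rw [if_pos hxb, if_neg hyb] at hxy
        exact hm ⟨y, Set.mem_Iio.2 (lt_of_le_of_ne hy hyb), hxy.symm⟩
      · exfalso
        rw [if_neg hxb, if_pos hyb] at hxy
        exact hm ⟨x, Set.mem_Iio.2 (lt_of_le_of_ne hx hxb), hxy⟩
      · rw [if_neg hxb, if_neg hyb] at hxy
        exact hG.1 (Set.mem_Iio.2 (lt_of_le_of_ne hx hxb)) (Set.mem_Iio.2 (lt_of_le_of_ne hy hyb)) hxy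
    · -- coinfinite range
      apply ((hG.2.1.diff (Set.finite_singleton m)).mono)
      intro n hn
      obtain ⟨hn1, hn2⟩ := hn
      rw [Set.mem_compl_iff] at hn1 ⊢
      rintro ⟨x, hx, hgx⟩
      beta_reduce at hgx
      by_cases hxb : x = β
      · rw [if_pos hxb] at hgx
        exact hn2 (hgx ▸ rfl)
      · rw [if_neg hxb] at hgx
        rw [Set.mem_Iio, Order.lt_succ_iff] at hx
        exact hn1 ⟨x, Set.mem_Iio.2 (lt_of_le_of_ne hx hxb), hgx⟩
    · -- coherence
      intro δ hδ
      rw [Order.lt_succ_iff] at hδ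
      rcases lt_or_eq_of_le hδ with hδβ | rfl
      · apply (hG.2.2 δ hδβ).subset
        rintro γ ⟨hγδ, hne⟩
        beta_reduce at hne
        have hγβ : γ ≠ β := ne_of_lt (hγδ.trans hδβ)
        rw [if_neg hγβ] at hne
        exact ⟨hγδ, hne⟩
      · apply Set.finite_empty.subset
        rintro γ ⟨hγδ, hne⟩
        beta_reduce at hne
        have hγβ : γ ≠ δ := ne_of_lt hγδ
        rw [if_neg hγβ] at hne
        exact hne rfl
  · -- limit case
    have hcard : α.card ≤ ℵ₀ := by
      have h1 : α.card < Cardinal.aleph 1 := Cardinal.lt_ord.1 hα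
      rwa [← Cardinal.succ_aleph0, Order.lt_succ_iff] at h1
    have hcount : Countable (Set.Iio α : Set Ordinal.{0}) := by
      rw [← Cardinal.mk_le_aleph0_iff, Ordinal.mk_Iio_ordinal]
      exact (Cardinal.lift_le.2 hcard).trans_eq Cardinal.lift_aleph0
    have hne : Nonempty (Set.Iio α : Set Ordinal.{0}) := ⟨⟨0, hlim.pos⟩⟩
    obtain ⟨s, hs⟩ := exists_surjective_nat (Set.Iio α : Set Ordinal.{0})
    set s' : ℕ → Ordinal.{0} := fun n => (s n : Ordinal.{0}) with hs'def
    have hs' : ∀ n, s' n < α := fun n => (s n).2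
    set a : ℕ → Ordinal.{0} := aSeq s' with hadef
    have haα : ∀ n, a n < α := aSeq_lt s' α hlim hs'
    have hastrict : StrictMono a := aSeq_strict s'
    have cover : ∀ β < α, ∃ n, β < a n := by
      intro β hβ
      obtain ⟨n, hn⟩ := hs ⟨β, hβ⟩
      refine ⟨n, ?_⟩
      have : s' n = β := congrArg Subtype.val hn
      rw [← this]
      exact aSeq_gt s' n
    have hECa : ∀ n, GoodAt (a n) (EC (a n)) := fun n => IH' (a n) (haα n)
    have H : ∀ n (g : Ordinal.{0} → ℕ), PStage a n g →
        ∃ g', (∀ γ < a n, g' γ = g γ) ∧ PStage a (n + 1) g' := by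
      intro n g hg
      obtain ⟨g', h1, h2, _, h4⟩ :=
        ext_step (a n) (a (n + 1)) (hastrict (Nat.lt_succ_self n)) (hECa (n + 1)) g hg.1 hg.2
      exact ⟨g', h1, h2, h4⟩
    have base : {g // PStage a 0 g} :=
      ⟨EC (a 0), (hECa 0).1, Set.finite_empty.subset (fun γ hγ => absurd rfl hγ.2)⟩
    set G : ℕ → Ordinal.{0} → ℕ := fun n => (FSeq a H base n).1 with hGdef
    have hagree : ∀ n m, n ≤ m → ∀ γ < a n, G m γ = G n γ :=
      FSeq_agree a H base hastrict.monotone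
    have hinj : ∀ n, Set.InjOn (G n) (Set.Iio (a n)) := fun n => (FSeq a H base n).2.1
    have hdiff : ∀ n, {γ | γ < a n ∧ G n γ ≠ EC (a n) γ}.Finite :=
      fun n => (FSeq a H base n).2.2
    set gl : Ordinal.{0} → ℕ := glue α a G cover with hgldef
    have hglinj : Set.InjOn gl (Set.Iio α) := glue_inj α a G cover hagree hastrict.monotone hinj
    have hgldiff : ∀ β < α, {γ | γ < β ∧ gl γ ≠ EC β γ}.Finite :=
      glue_diff α a G cover hagree hECa hdiff
    refine ⟨repair a gl, ?_, ?_, ?_⟩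
    · exact repair_injOn α a gl hastrict.injective haα hglinj
    · exact repair_compl α a gl hastrict.injective haα hglinj
    · exact fun β hβ => repair_diff α a gl hastrict cover hgldiff β hβ

end Stmt4Aux

/-- there is a coherent sequence `(e_α : α < ω₁)` of injections
`e_α : α → ℕ`: any two of them differ at only finitely many common arguments. -/
theorem stmt4 :
    ∃ e : (α : Ordinal.{0}) → {β : Ordinal.{0} // β < α} → ℕ,
      (∀ α, α < (Cardinal.aleph 1).ord → Function.Injective (e α)) ∧
      ∀ α₁ α₂ : Ordinal.{0}, α₁ < (Cardinal.aleph 1).ord → α₂ < (Cardinal.aleph 1).ord →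
        {β : Ordinal.{0} | ∃ h₁ : β < α₁, ∃ h₂ : β < α₂,
          e α₁ ⟨β, h₁⟩ ≠ e α₂ ⟨β, h₂⟩}.Finite := by
  refine ⟨fun α p => EC α p.1, ?_, ?_⟩
  · intro α hα x y hxy
    exact Subtype.ext ((good_all α hα).1 (Set.mem_Iio.2 x.2) (Set.mem_Iio.2 y.2) hxy)
  · intro α₁ α₂ h₁ h₂
    have key : ∀ β₁ β₂ : Ordinal.{0}, β₁ < β₂ → β₂ < (Cardinal.aleph 1).ord →
        {β : Ordinal.{0} | ∃ h₁ : β < β₁, ∃ h₂ : β < β₂, EC β₁ β ≠ EC β₂ β}.Finite := by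
      intro β₁ β₂ hb hβ₂
      apply ((good_all β₂ hβ₂).2.2 β₁ hb).subset
      rintro γ ⟨hγ₁, _, hne⟩
      exact ⟨hγ₁, fun hc => hne hc.symm⟩
    rcases lt_trichotomy α₁ α₂ with h | rfl | h
    · exact key α₁ α₂ h h₂
    · apply Set.finite_empty.subset
      rintro γ ⟨_, _, hne⟩
      exact hne rfl
    · apply ((key α₂ α₁ h h₁).subset)
      rintro γ ⟨hγ₁, hγ₂, hne⟩
      exact ⟨hγ₂, hγ₁, fun hc => hne hc.symm⟩
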